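/- Suppose for indices i ≤ s ≤ j (boundary vertices b_1,...,b_k of piece P sorted by distance from u ∉ V(P)) we have d_G(u,b_i) > d_G(u,b_s) − r for the minimal such i, and d_G(u,b_j) < d_G(u,b_s) + r for the maximal such j, and assume every simple path inside P has length < r. Then for every l with s ≤ l ≤ j and every v ∈ V(P): v ∈ B(u, d_G(u,b_l)) if and only if either v is reachable in P from {b_1,...,b_{i−1}}, or there exists t ∈ {i,...,j} with (d_G(u,b_t) − d_G(u,b_s)) + d_P(b_t,v) ≤ d_G(u,b_l) − d_G(u,b_s). -/
import Mathlib


open scoped ENNReal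

/-- Interval-ball-unique lemma: `G` is an unweighted digraph with distances
`dG : ℕ∞`, `P` a piece with vertex set `VP`, internal distances `dP` (with every
finite distance inside `P` strictly below `r`), and boundary vertices
`b 0, …, b (k−1)` sorted nondecreasingly by distance from `u ∉ VP`; distances from
`u` into the piece decompose through the boundary.  Let `i` be minimal with
`dG u (b i) > dG u (b s) − r` (additively: `dG u (b s) < dG u (b i) + r`) and `j`
maximal with `dG u (b j) < dG u (b s) + r`.  Then for every `l` with `s ≤ l ≤ j`
and every `v ∈ VP`: `v ∈ B(u, dG u (b l))` iff either `v` is reachable in `P` from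
`{b 0, …, b (i−1)}`, or there is `t ∈ {i,…,j}` with
`(dG u (b t) − dG u (b s)) + dP (b t) v ≤ dG u (b l) − dG u (b s)` (stated
additively as `dG u (b t) + dP (b t) v ≤ dG u (b l)`). -/
theorem stmt_19 {V : Type*} (VP : Set V) (k r : ℕ) (hr : 0 < r)
    (b : Fin k → V) (hbVP : ∀ i, b i ∈ VP)
    (dG dP : V → V → ℕ∞) (u : V) (hu : u ∉ VP)
    (hsort : Monotone fun i => dG u (b i))
    (hdec : ∀ x ∈ VP, dG u x = ⨅ t : Fin k, (dG u (b t) + dP (b t) x))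
    (hdiam : ∀ x ∈ VP, ∀ y ∈ VP, dP x y ≠ ⊤ → dP x y < (r : ℕ∞))
    (s i j : Fin k)
    (hi1 : dG u (b s) < dG u (b i) + (r : ℕ∞))
    (hi2 : ∀ i', dG u (b s) < dG u (b i') + (r : ℕ∞) → i ≤ i')
    (hj1 : dG u (b j) < dG u (b s) + (r : ℕ∞))
    (hj2 : ∀ j', dG u (b j') < dG u (b s) + (r : ℕ∞) → j' ≤ j) :
    ∀ l : Fin k, s ≤ l → l ≤ j → ∀ v ∈ VP,
      (dG u v ≤ dG u (b l) ↔
        ((∃ i' : Fin k, i' < i ∧ dP (b i') v ≠ ⊤) ∨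
          ∃ t : Fin k, i ≤ t ∧ t ≤ j ∧ dG u (b t) + dP (b t) v ≤ dG u (b l))) := by
  intro l hsl hlj v hv
  have hne : Nonempty (Fin k) := ⟨s⟩
  have hsfin : dG u (b s) ≠ ⊤ := (hi1.trans_le le_top).ne
  have hsr : dG u (b s) + (r : ℕ∞) ≠ ⊤ :=
    WithTop.add_ne_top.mpr ⟨hsfin, WithTop.coe_ne_top⟩
  have his : i ≤ s := hi2 s (by
    have : (0 : ℕ∞) < (r : ℕ∞) := by exact_mod_cast hr
    calc dG u (b s) = dG u (b s) + 0 := by simp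
    _ < dG u (b s) + (r : ℕ∞) := WithTop.add_lt_add_left hsfin this)
  have hlfin : dG u (b l) ≠ ⊤ := by
    have : dG u (b l) ≤ dG u (b j) := hsort hlj
    exact (this.trans_lt (hj1.trans_le le_top)).ne
  have hdecv := hdec v hv
  constructor
  · intro hball
    -- pick minimizer
    obtain ⟨t, -, ht⟩ := Finset.exists_min_image (Finset.univ : Finset (Fin k))
      (fun t => dG u (b t) + dP (b t) v) ⟨s, Finset.mem_univ s⟩
    have hft : dG u (b t) + dP (b t) v ≤ dG u (b l) := by
      have : dG u (b t) + dP (b t) v ≤ dG u v := by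
        rw [hdecv]
        exact le_iInf fun t' => ht t' (Finset.mem_univ t')
      exact this.trans hball
    rcases lt_or_ge t i with hti | hit
    · left
      refine ⟨t, hti, ?_⟩
      intro htop
      rw [htop] at hft
      simp at hft
      exact hlfin hft
    · right
      refine ⟨t, hit, ?_, hft⟩
      by_contra htj
      have h1 : dG u (b s) + (r : ℕ∞) ≤ dG u (b t) :=
        le_of_not_gt fun h => htj (hj2 t h)
      have h2 : dG u (b t) ≤ dG u (b l) :=
        le_add_right le_rfl |>.trans hft
      have h3 : dG u (b l) ≤ dG u (b j) := hsort hlj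
      exact absurd ((h1.trans h2).trans h3) (not_le.mpr hj1)
  · rintro (⟨i', hi'lt, hi'top⟩ | ⟨t, hit, htj, ht⟩)
    · have hile : dG u (b i') + (r : ℕ∞) ≤ dG u (b s) :=
        le_of_not_gt fun h => absurd (hi2 i' h) (not_le.mpr hi'lt)
      have hifin : dG u (b i') ≠ ⊤ := by
        intro h
        rw [h] at hile
        simp at hile
        exact hsfin hile
      have hd : dP (b i') v < (r : ℕ∞) := hdiam _ (hbVP i') _ hv hi'top
      have : dG u v < dG u (b s) := by
        calc dG u v ≤ dG u (b i') + dP (b i') v := by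
              rw [hdecv]; exact iInf_le _ i'
        _ < dG u (b i') + (r : ℕ∞) := WithTop.add_lt_add_left hifin hd
        _ ≤ dG u (b s) := hile
      exact this.le.trans (hsort hsl)
    · calc dG u v ≤ dG u (b t) + dP (b t) v := by
            rw [hdecv]; exact iInf_le _ t
      _ ≤ dG u (b l) := ht
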